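/- Under the same assumptions, the expected integrated sidelobe level of the periodic ACF satisfies Σ_{k=1}^{N−1} E|r̃_k|² = [(N−1)μ₄ + 1]·Σ_{i=1}^N P_i² − N². -/

import Mathlib

open MeasureTheory ProbabilityTheory Complex Finset

private lemma norm_sq_sum_expand {N : ℕ} (c : Fin N → ℂ) (b : Fin N → ℝ) :
    ‖∑ n : Fin N, (b n : ℂ) * c n‖ ^ 2
      = ∑ n : Fin N, ∑ m : Fin N, b n * b m * (c n * (starRingEnd ℂ) (c m)).re := by
  rw [show ‖∑ n : Fin N, (b n : ℂ) * c n‖ ^ 2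
      = ((∑ n : Fin N, (b n : ℂ) * c n) * (starRingEnd ℂ) (∑ n : Fin N, (b n : ℂ) * c n)).re by
    rw [Complex.mul_conj, Complex.ofReal_re, ← Complex.sq_norm]]
  rw [map_sum, Finset.sum_mul_sum, Complex.re_sum]
  refine Finset.sum_congr rfl fun n _ => ?_
  rw [Complex.re_sum]
  refine Finset.sum_congr rfl fun m _ => ?_
  rw [map_mul, Complex.conj_ofReal,
    show ((b n : ℂ) * c n * ((b m : ℂ) * (starRingEnd ℂ) (c m)))
      = ((b n * b m : ℝ) : ℂ) * (c n * (starRingEnd ℂ) (c m)) by push_cast; ring,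
    Complex.re_ofReal_mul]

private noncomputable def cc (N k : ℕ) (n : Fin N) : ℂ :=
  Complex.exp (2 * Real.pi * Complex.I * (k : ℂ) * ((n : ℕ) : ℂ) / N)

private lemma conj_exp_arg (a : ℝ) (k m N : ℕ) :
    (starRingEnd ℂ) (Complex.exp (2 * (a:ℂ) * Complex.I * k * m / N))
      = Complex.exp (-(2 * (a:ℂ) * Complex.I * k * m / N)) := by
  rw [← Complex.exp_conj]
  congr 1
  simp [map_div₀, Complex.conj_I, map_ofNat]
  ring

private lemma cc_mul_conj_self (N k : ℕ) (n : Fin N) :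
    cc N k n * (starRingEnd ℂ) (cc N k n) = 1 := by
  rw [cc, conj_exp_arg, ← Complex.exp_add, add_neg_cancel, Complex.exp_zero]

private lemma orth {N : ℕ} (hN : 0 < N) (n m : Fin N) (hnm : n ≠ m) :
    ∑ k ∈ Finset.range N, (cc N k n * (starRingEnd ℂ) (cc N k m)) = 0 := by
  simp only [cc]
  set d : ℤ := (n : ℤ) - (m : ℤ) with hd
  have hdne : d ≠ 0 := by
    simp only [hd, sub_ne_zero]
    exact_mod_cast fun h => hnm (Fin.ext (by exact_mod_cast h))
  have hdlt : |d| < (N : ℤ) := by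
    have h1 := n.isLt; have h2 := m.isLt
    rw [hd, abs_sub_lt_iff]; omega
  have hNc : (N : ℂ) ≠ 0 := Nat.cast_ne_zero.mpr hN.ne'
  set x : ℂ := Complex.exp (2 * (Real.pi:ℂ) * Complex.I * (d : ℂ) / N) with hx
  have hterm : ∀ k ∈ Finset.range N,
      Complex.exp (2 * (Real.pi:ℂ) * Complex.I * k * ((n : ℕ) : ℂ) / N) *
        (starRingEnd ℂ) (Complex.exp (2 * (Real.pi:ℂ) * Complex.I * k * ((m : ℕ) : ℂ) / N)) = x ^ k := by
    intro k _
    rw [conj_exp_arg, ← Complex.exp_add, hx, ← Complex.exp_nat_mul]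
    congr 1
    push_cast [hd]
    ring
  rw [Finset.sum_congr rfl hterm]
  have hxN : x ^ N = 1 := by
    rw [hx, ← Complex.exp_nat_mul,
      show (N : ℂ) * (2 * (Real.pi:ℂ) * Complex.I * (d : ℂ) / N) = (d : ℂ) * (2 * (Real.pi:ℂ) * Complex.I) by
        field_simp]
    exact Complex.exp_int_mul_two_pi_mul_I d
  have hx1 : x ≠ 1 := by
    intro h
    rw [hx, Complex.exp_eq_one_iff] at h
    obtain ⟨j, hj⟩ := h
    have hπ : (2 * (Real.pi:ℂ) * Complex.I) ≠ 0 := by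
      simp [Real.pi_ne_zero, Complex.I_ne_zero, Complex.ofReal_ne_zero]
    have h3 : (2 * (Real.pi:ℂ) * Complex.I) * (d : ℂ)
        = (2 * (Real.pi:ℂ) * Complex.I) * ((j : ℂ) * N) := by
      field_simp at hj
      linear_combination (2 * (Real.pi:ℂ) * Complex.I) * hj
    have h4 : (d : ℂ) = (j : ℂ) * N := mul_left_cancel₀ hπ h3
    have h5 : d = j * N := by exact_mod_cast h4
    have : d = 0 := Int.eq_zero_of_abs_lt_dvd ⟨j, by linarith [h5]⟩ hdlt
    exact hdne this
  rw [geom_sum_eq hx1, hxN]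
  simp

/-- EISL of the periodic ACF:
`Σ_{k=1}^{N−1} E|r̃_k|² = [(N−1)μ₄ + 1]·Σ_i P_i² − N²` when `Σ_i P_i = N`,
where `r̃_k = Σ_n P_n |s_n|² e^{2πi k(n-1)/N}` for i.i.d. symbols. -/
theorem eisl_periodic_acf {Ω : Type*} [MeasurableSpace Ω] (μ : Measure Ω)
    [IsProbabilityMeasure μ] (N : ℕ) (hN : 0 < N) (s : Fin N → Ω → ℂ)
    (hmeas : ∀ n, Measurable (s n))
    (hindep : iIndepFun s μ)
    (hid : ∀ i j, IdentDistrib (s i) (s j) μ μ)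
    (hL4 : ∀ n, MemLp (s n) 4 μ)
    (μ4 : ℝ)
    (h2 : ∀ n, ∫ ω, ‖s n ω‖ ^ 2 ∂μ = 1)
    (h0 : ∀ n, ∫ ω, s n ω ∂μ = 0)
    (hps : ∀ n, ∫ ω, (s n ω) ^ 2 ∂μ = 0)
    (h4 : ∀ n, ∫ ω, ‖s n ω‖ ^ 4 ∂μ = μ4)
    (P : Fin N → ℝ) (hP : ∀ n, 0 ≤ P n) (hsum : ∑ i : Fin N, P i = N) :
    ∑ k ∈ Finset.Ico 1 N,
        ∫ ω, ‖∑ n : Fin N, ((P n : ℝ) : ℂ) * ((‖s n ω‖ ^ 2 : ℝ) : ℂ) *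
            Complex.exp (2 * Real.pi * Complex.I * (k : ℂ) * ((n : ℕ) : ℂ) / N)‖ ^ 2 ∂μ
      = ((N - 1 : ℝ) * μ4 + 1) * ∑ i : Fin N, P i ^ 2 - (N : ℝ) ^ 2 := by
  classical
  -- measurability and integrability
  have hXmeas : ∀ n, Measurable (fun ω => ‖s n ω‖ ^ 2) :=
    fun n => (hmeas n).norm.pow_const 2
  have hint4 : ∀ n, Integrable (fun ω => ‖s n ω‖ ^ 4) μ := by
    intro n
    have h := (hL4 n).integrable_norm_rpow (by norm_num) (by norm_num)
    have heq : (fun x => ‖s n x‖ ^ (4 : ENNReal).toReal) = fun x => ‖s n x‖ ^ (4 : ℕ) := by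
      ext x
      rw [show ((4 : ENNReal).toReal) = ((4 : ℕ) : ℝ) by norm_num, Real.rpow_natCast]
    rwa [heq] at h
  have hintXX : ∀ n m, Integrable (fun ω => ‖s n ω‖ ^ 2 * ‖s m ω‖ ^ 2) μ := by
    intro n m
    refine Integrable.mono' (((hint4 n).add (hint4 m)).const_mul (1/2))
      (((hXmeas n).mul (hXmeas m)).aestronglyMeasurable) ?_
    filter_upwards with ω
    rw [Real.norm_eq_abs, _root_.abs_of_nonneg (by positivity)]
    simp only [Pi.add_apply]
    nlinarith [sq_nonneg (‖s n ω‖ ^ 2 - ‖s m ω‖ ^ 2)]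
  -- second moments of the squared norms
  have hmom : ∀ n m, ∫ ω, ‖s n ω‖ ^ 2 * ‖s m ω‖ ^ 2 ∂μ = if n = m then μ4 else 1 := by
    intro n m
    by_cases h : n = m
    · subst h
      rw [if_pos rfl,
        integral_congr_ae (Filter.Eventually.of_forall
          (fun ω => by ring : ∀ ω, ‖s n ω‖ ^ 2 * ‖s n ω‖ ^ 2 = ‖s n ω‖ ^ 4))]
      exact h4 n
    · rw [if_neg h]
      have hind : IndepFun (fun ω => ‖s n ω‖ ^ 2) (fun ω => ‖s m ω‖ ^ 2) μ :=
        (hindep.indepFun h).comp (measurable_norm.pow_const 2) (measurable_norm.pow_const 2)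
      have hmul := hind.integral_mul_eq_mul_integral (hXmeas n).aestronglyMeasurable
        (hXmeas m).aestronglyMeasurable
      have hgoal : integral μ ((fun ω => ‖s n ω‖ ^ 2) * fun ω => ‖s m ω‖ ^ 2) = 1 := by
        rw [hmul, h2 n, h2 m, mul_one]
      exact hgoal
  -- the k-th expected squared magnitude
  have hEk : ∀ k : ℕ,
      (∫ ω, ‖∑ n : Fin N, ((P n : ℝ) : ℂ) * ((‖s n ω‖ ^ 2 : ℝ) : ℂ) *
            Complex.exp (2 * Real.pi * Complex.I * (k : ℂ) * ((n : ℕ) : ℂ) / N)‖ ^ 2 ∂μ)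
        = (μ4 - 1) * (∑ i : Fin N, P i ^ 2)
          + ∑ n : Fin N, ∑ m : Fin N,
              P n * P m * (cc N k n * (starRingEnd ℂ) (cc N k m)).re := by
    intro k
    have hptw : ∀ ω, ‖∑ n : Fin N, ((P n : ℝ) : ℂ) * ((‖s n ω‖ ^ 2 : ℝ) : ℂ) *
            Complex.exp (2 * Real.pi * Complex.I * (k : ℂ) * ((n : ℕ) : ℂ) / N)‖ ^ 2
        = ∑ n : Fin N, ∑ m : Fin N,
            (P n * P m * (cc N k n * (starRingEnd ℂ) (cc N k m)).re)
              * (‖s n ω‖ ^ 2 * ‖s m ω‖ ^ 2) := by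
      intro ω
      have h := norm_sq_sum_expand (cc N k) (fun n => P n * ‖s n ω‖ ^ 2)
      rw [show (∑ n : Fin N, ((P n * ‖s n ω‖ ^ 2 : ℝ) : ℂ) * cc N k n)
          = ∑ n : Fin N, ((P n : ℝ) : ℂ) * ((‖s n ω‖ ^ 2 : ℝ) : ℂ) *
              Complex.exp (2 * Real.pi * Complex.I * (k : ℂ) * ((n : ℕ) : ℂ) / N) from
        Finset.sum_congr rfl fun n _ => by rw [cc]; push_cast; ring] at h
      rw [h]
      exact Finset.sum_congr rfl fun n _ => Finset.sum_congr rfl fun m _ => by ring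
    rw [integral_congr_ae (Filter.Eventually.of_forall hptw),
      integral_finset_sum _ (fun n _ =>
        integrable_finset_sum _ (fun m _ => (hintXX n m).const_mul _))]
    have hinner : ∀ n : Fin N,
        (∫ ω, ∑ m : Fin N,
            (P n * P m * (cc N k n * (starRingEnd ℂ) (cc N k m)).re)
              * (‖s n ω‖ ^ 2 * ‖s m ω‖ ^ 2) ∂μ)
          = ∑ m : Fin N, (P n * P m * (cc N k n * (starRingEnd ℂ) (cc N k m)).re)
              * (if n = m then μ4 else 1) := by
      intro n
      rw [integral_finset_sum _ (fun m _ => (hintXX n m).const_mul _)]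
      exact Finset.sum_congr rfl fun m _ => by rw [MeasureTheory.integral_const_mul, hmom]
    rw [Finset.sum_congr rfl fun n _ => hinner n]
    have hsplit : ∀ n m : Fin N,
        (P n * P m * (cc N k n * (starRingEnd ℂ) (cc N k m)).re) * (if n = m then μ4 else 1)
          = P n * P m * (cc N k n * (starRingEnd ℂ) (cc N k m)).re
            + (if n = m then P n * P m * (cc N k n * (starRingEnd ℂ) (cc N k m)).re * (μ4 - 1)
              else 0) := by
      intro n m; split <;> ring
    simp_rw [hsplit, Finset.sum_add_distrib, Finset.sum_ite_eq, Finset.mem_univ, if_pos,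
      cc_mul_conj_self, Complex.one_re]
    rw [add_comm]
    congr 1
    rw [Finset.mul_sum]
    exact Finset.sum_congr rfl fun n _ => by ring
  -- Parseval-type identity
  have hpars : ∑ k ∈ Finset.range N, (∑ n : Fin N, ∑ m : Fin N,
      P n * P m * (cc N k n * (starRingEnd ℂ) (cc N k m)).re)
      = N * ∑ i : Fin N, P i ^ 2 := by
    rw [Finset.sum_comm]
    rw [show (∑ n : Fin N, ∑ k ∈ Finset.range N, ∑ m : Fin N,
        P n * P m * (cc N k n * (starRingEnd ℂ) (cc N k m)).re)
        = ∑ n : Fin N, ∑ m : Fin N, ∑ k ∈ Finset.range N,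
            P n * P m * (cc N k n * (starRingEnd ℂ) (cc N k m)).re from
      Finset.sum_congr rfl fun n _ => Finset.sum_comm]
    have hval : ∀ n m : Fin N,
        (∑ k ∈ Finset.range N, cc N k n * (starRingEnd ℂ) (cc N k m))
          = if n = m then (N : ℂ) else 0 := by
      intro n m
      by_cases h : n = m
      · subst h
        rw [if_pos rfl, Finset.sum_congr rfl fun k _ => cc_mul_conj_self N k n]
        simp
      · rw [if_neg h]
        exact orth hN n m h
    have hstep : ∀ n m : Fin N, (∑ k ∈ Finset.range N,
        P n * P m * (cc N k n * (starRingEnd ℂ) (cc N k m)).re)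
        = P n * P m * (if n = m then (N : ℝ) else 0) := by
      intro n m
      rw [← Finset.mul_sum, ← Complex.re_sum, hval]
      congr 1
      split <;> simp
    simp_rw [hstep, mul_ite, mul_zero, Finset.sum_ite_eq, Finset.mem_univ, if_pos]
    rw [Finset.mul_sum]
    exact Finset.sum_congr rfl fun n _ => by ring
  -- value at k = 0
  have hT0 : (∑ n : Fin N, ∑ m : Fin N,
      P n * P m * (cc N 0 n * (starRingEnd ℂ) (cc N 0 m)).re) = (N : ℝ) ^ 2 := by
    have hc0 : ∀ n : Fin N, cc N 0 n = 1 := by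
      intro n
      rw [cc]
      norm_num
    simp_rw [hc0, map_one, mul_one, Complex.one_re, mul_one]
    rw [← Finset.sum_mul_sum, hsum]
    ring
  -- assemble
  rw [Finset.sum_congr rfl fun k _ => hEk k, Finset.sum_add_distrib, Finset.sum_const,
    Nat.card_Ico]
  have hIco : (∑ k ∈ Finset.Ico 1 N, ∑ n : Fin N, ∑ m : Fin N,
      P n * P m * (cc N k n * (starRingEnd ℂ) (cc N k m)).re)
      = N * (∑ i : Fin N, P i ^ 2) - (N : ℝ) ^ 2 := by
    have h := hpars
    rw [Finset.range_eq_Ico, Finset.sum_eq_sum_Ico_succ_bot hN, hT0] at h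
    linarith
  rw [hIco, nsmul_eq_mul, Nat.cast_sub hN, Nat.cast_one]
  ring
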